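/- Let n ≥ 1 and let γ = (τ, s) be a type D clan on 2n positions that avoids the pattern (1,2,1,2). Then v(γ) is a type D element of S_{2n}: it is a signed element and #{i ∈ {1,…,n} : v(γ)(i) > n} is even. -/

import Mathlib

private theorem stmt4_split_aux {m : ℕ} (P : Fin m → Prop) [DecidablePred P]
    (k : Fin m) (hPk : P k) :
    (Finset.univ.filter P).card
      = (Finset.univ.filter fun j => P j ∧ j < k).card
        + ((Finset.univ.filter fun j => P j ∧ k < j).card + 1) := by
  have h1 : (Finset.univ.filter P)
      = (Finset.univ.filter fun j => P j ∧ j < k)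
        ∪ insert k (Finset.univ.filter fun j => P j ∧ k < j) := by
    ext j
    simp only [Finset.mem_filter, Finset.mem_univ, true_and, Finset.mem_union,
      Finset.mem_insert]
    constructor
    · intro hPj
      rcases lt_trichotomy j k with h' | h' | h'
      · exact Or.inl ⟨hPj, h'⟩
      · exact Or.inr (Or.inl h')
      · exact Or.inr (Or.inr ⟨hPj, h'⟩)
    · rintro (⟨hPj, -⟩ | h | ⟨hPj, -⟩)
      · exact hPj
      · rw [h]; exact hPk
      · exact hPj
  rw [h1, Finset.card_union_of_disjoint, Finset.card_insert_of_notMem]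
  · simp only [Finset.mem_filter, Finset.mem_univ, true_and, not_and]
    intro _; exact lt_irrefl k
  · rw [Finset.disjoint_insert_right]
    constructor
    · simp only [Finset.mem_filter, Finset.mem_univ, true_and, not_and]
      intro _ h; exact absurd h (lt_irrefl k)
    · rw [Finset.disjoint_filter]
      rintro x _ ⟨-, h1⟩ ⟨-, h2⟩
      exact lt_asymm h1 h2


/-- For a type D clan `γ = (τ, s)` on `2n` positions (a skew-symmetric
`(n,n)`-clan with `τ i ≠ i.rev` for all `i` and with
`#{i ≤ n : τ i = i ∧ s i = -1} + #{i : i < τ i ≤ n}` even) avoiding the pattern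
`(1,2,1,2)`, the permutation `v(γ)` is a type D element of `S_{2n}`:
it is a signed element and `#{i ∈ {1,…,n} : v(γ)(i) > n}` is even.
(Positions/values are modeled zero-based by `Fin (2*n)`: "`i ≤ n`" becomes
`(i : ℕ) < n` and "value `> n`" becomes `n ≤ (π i : ℕ)`.) -/
theorem stmt_4 (n : ℕ) (hn : 1 ≤ n)
    (τ : Equiv.Perm (Fin (2 * n))) (s : Fin (2 * n) → ℤ)
    -- τ is an involution
    (hinv : ∀ i, τ (τ i) = i)
    -- signs of fixed points are ±1
    (hsgn : ∀ i, τ i = i → s i = 1 ∨ s i = -1)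
    -- (n,n)-clan: #(plus fixed points) - #(minus fixed points) = n - n = 0
    (hbal : (Finset.univ.filter (fun i => τ i = i ∧ s i = 1)).card
          = (Finset.univ.filter (fun i => τ i = i ∧ s i = -1)).card)
    -- skew-symmetry
    (hskew₁ : ∀ i, τ i.rev = (τ i).rev)
    (hskew₂ : ∀ i, τ i = i → τ i.rev = i.rev ∧ s i.rev = - s i)
    -- type D conditions
    (hD₁ : ∀ i : Fin (2 * n), τ i ≠ i.rev)
    (hD₂ : Even ((Finset.univ.filter (fun i : Fin (2 * n) =>
              (i : ℕ) < n ∧ τ i = i ∧ s i = -1)).card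
          + (Finset.univ.filter (fun i : Fin (2 * n) =>
              i < τ i ∧ (τ i : ℕ) < n)).card))
    -- γ avoids the pattern (1,2,1,2)
    (havoid : ¬ ∃ i j k l : Fin (2 * n), i < j ∧ j < k ∧ k < l ∧ τ i = k ∧ τ j = l)
    -- π = v(γ)
    (π : Equiv.Perm (Fin (2 * n)))
    (hπmem : ∀ i, ((τ i = i ∧ s i = 1) ∨ i < τ i) ↔ (π i : ℕ) < n)
    (hπincA : ∀ i j : Fin (2 * n), ((τ i = i ∧ s i = 1) ∨ i < τ i) →
        ((τ j = j ∧ s j = 1) ∨ j < τ j) → i < j → π i < π j)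
    (hπincB : ∀ i j : Fin (2 * n), ¬ ((τ i = i ∧ s i = 1) ∨ i < τ i) →
        ¬ ((τ j = j ∧ s j = 1) ∨ j < τ j) → i < j → π i < π j) :
    (∀ k : Fin (2 * n), π k.rev = (π k).rev) ∧
    Even (Finset.univ.filter (fun i : Fin (2 * n) =>
        (i : ℕ) < n ∧ n ≤ (π i : ℕ))).card := by
  classical
  set A : Fin (2 * n) → Prop := fun i => (τ i = i ∧ s i = 1) ∨ i < τ i with hAdef
  -- key lemma: A i ↔ ¬ A i.rev
  have key : ∀ i, A i ↔ ¬ A i.rev := by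
    intro i
    by_cases hfix : τ i = i
    · obtain ⟨hf, hs⟩ := hskew₂ i hfix
      rcases hsgn i hfix with h1 | h1
      · have hAi : A i := Or.inl ⟨hfix, h1⟩
        have hAr : ¬ A i.rev := by
          rintro (⟨-, hs'⟩ | hlt)
          · rw [hs, h1] at hs'; norm_num at hs'
          · rw [hf] at hlt; exact lt_irrefl _ hlt
        simp [hAi, hAr]
      · have hAi : ¬ A i := by
          rintro (⟨-, hs'⟩ | hlt)
          · rw [h1] at hs'; norm_num at hs'
          · rw [hfix] at hlt; exact lt_irrefl _ hlt
        have hAr : A i.rev := Or.inl ⟨hf, by rw [hs, h1]; norm_num⟩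
        simp [hAi, hAr]
    · have hfr : τ i.rev ≠ i.rev := by
        rw [hskew₁]; exact fun h => hfix (Fin.rev_inj.mp h)
      have h1 : A i ↔ i < τ i := by
        constructor
        · rintro (⟨h, -⟩ | h)
          · exact absurd h hfix
          · exact h
        · exact Or.inr
      have h2 : A i.rev ↔ τ i < i := by
        constructor
        · rintro (⟨h, -⟩ | h)
          · exact absurd h hfr
          · rw [hskew₁] at h; exact Fin.rev_lt_rev.mp h
        · intro h; exact Or.inr (by rw [hskew₁]; exact Fin.rev_lt_rev.mpr h)
      rw [h1, h2]
      constructor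
      · exact fun h => lt_asymm h
      · intro h
        rcases lt_trichotomy i (τ i) with h' | h' | h'
        · exact h'
        · exact absurd h'.symm hfix
        · exact absurd h' h
  have key' : ∀ i, ¬ A i ↔ A i.rev := by
    intro i
    rw [key i.rev, Fin.rev_rev]
  have hmem : ∀ i, A i ↔ (π i : ℕ) < n := hπmem
  have hmem' : ∀ i, ¬ A i ↔ n ≤ (π i : ℕ) := by
    intro i; rw [hmem i]; exact not_lt
  -- the set A has exactly n elements
  have hb : (Finset.univ.filter A).card
      = (Finset.univ.filter fun i => ¬ A i).card := by
    apply Finset.card_nbij' Fin.rev Fin.rev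
    · intro a ha
      simp only [Finset.mem_coe, Finset.mem_filter, Finset.mem_univ, true_and] at ha ⊢
      exact (key a).mp ha
    · intro a ha
      simp only [Finset.mem_coe, Finset.mem_filter, Finset.mem_univ, true_and] at ha ⊢
      exact (key' a).mp ha
    · intro a _; exact Fin.rev_rev a
    · intro a _; exact Fin.rev_rev a
  have ht := Finset.card_filter_add_card_filter_not
    (s := (Finset.univ : Finset (Fin (2 * n)))) A
  rw [Finset.card_univ, Fintype.card_fin] at ht
  have cardA : (Finset.univ.filter A).card = n := by omega
  have cardA' : (Finset.univ.filter fun i => ¬ A i).card = n := by omega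
  -- rank formula
  have rank : ∀ i, ((π i : ℕ)) = (Finset.univ.filter fun j => π j < π i).card := by
    intro i
    have h1 : (Finset.univ.filter fun v : Fin (2 * n) => v < π i) = Finset.Iio (π i) := by
      ext v; simp
    have h2 : (Finset.univ.filter fun j => π j < π i).card
        = (Finset.univ.filter fun v : Fin (2 * n) => v < π i).card := by
      apply Finset.card_equiv π
      intro j; simp
    rw [h2, h1, Fin.card_Iio]
  have rankA : ∀ i, A i →
      (π i : ℕ) = (Finset.univ.filter fun j => A j ∧ j < i).card := by
    intro i hi
    rw [rank i]
    congr 1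
    apply Finset.filter_congr
    intro j _
    constructor
    · intro hji
      have hji' : (π j : ℕ) < (π i : ℕ) := hji
      have hAj : A j := by
        rw [hmem j]
        exact lt_trans hji' ((hmem i).mp hi)
      refine ⟨hAj, ?_⟩
      rcases lt_trichotomy j i with h' | h' | h'
      · exact h'
      · rw [h'] at hji; exact absurd hji (lt_irrefl _)
      · exact absurd (hπincA i j hi hAj h') (lt_asymm hji)
    · rintro ⟨hAj, hji⟩
      exact hπincA j i hAj hi hji
  have rankB : ∀ i, ¬ A i →
      (π i : ℕ) = n + (Finset.univ.filter fun j => ¬ A j ∧ j < i).card := by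
    intro i hi
    rw [rank i]
    have hsplit : (Finset.univ.filter fun j => π j < π i)
        = (Finset.univ.filter A) ∪ (Finset.univ.filter fun j => ¬ A j ∧ j < i) := by
      ext j
      simp only [Finset.mem_filter, Finset.mem_univ, true_and, Finset.mem_union]
      constructor
      · intro hji
        by_cases hAj : A j
        · exact Or.inl hAj
        · refine Or.inr ⟨hAj, ?_⟩
          rcases lt_trichotomy j i with h' | h' | h'
          · exact h'
          · rw [h'] at hji; exact absurd hji (lt_irrefl _)
          · exact absurd (hπincB i j hi hAj h') (lt_asymm hji)
      · rintro (hAj | ⟨hAj, hji⟩)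
        · exact Fin.lt_def.mpr (lt_of_lt_of_le ((hmem j).mp hAj) ((hmem' i).mp hi))
        · exact hπincB j i hAj hi hji
    rw [hsplit, Finset.card_union_of_disjoint, cardA]
    rw [Finset.disjoint_filter]
    rintro x _ hx ⟨hx', -⟩
    exact hx' hx
  -- reflecting the "before rev" counts to "after" counts
  have hrevcard : ∀ b : Fin (2 * n),
      (Finset.univ.filter fun j => ¬ A j ∧ j < b.rev).card
        = (Finset.univ.filter fun j => A j ∧ b < j).card := by
    intro b
    apply Finset.card_nbij' Fin.rev Fin.rev
    · intro a ha
      simp only [Finset.mem_coe, Finset.mem_filter, Finset.mem_univ, true_and] at ha ⊢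
      exact ⟨(key' a).mp ha.1, Fin.lt_rev_iff.mp ha.2⟩
    · intro a ha
      simp only [Finset.mem_coe, Finset.mem_filter, Finset.mem_univ, true_and] at ha ⊢
      exact ⟨(key a).mp ha.1, Fin.rev_lt_rev.mpr ha.2⟩
    · intro a _; exact Fin.rev_rev a
    · intro a _; exact Fin.rev_rev a
  have hrevcard' : ∀ b : Fin (2 * n),
      (Finset.univ.filter fun j => A j ∧ j < b.rev).card
        = (Finset.univ.filter fun j => ¬ A j ∧ b < j).card := by
    intro b
    apply Finset.card_nbij' Fin.rev Fin.rev
    · intro a ha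
      simp only [Finset.mem_coe, Finset.mem_filter, Finset.mem_univ, true_and] at ha ⊢
      exact ⟨(key a).mp ha.1, Fin.lt_rev_iff.mp ha.2⟩
    · intro a ha
      simp only [Finset.mem_coe, Finset.mem_filter, Finset.mem_univ, true_and] at ha ⊢
      exact ⟨(key' a).mp ha.1, Fin.rev_lt_rev.mpr ha.2⟩
    · intro a _; exact Fin.rev_rev a
    · intro a _; exact Fin.rev_rev a
  constructor
  · -- part 1
    intro k
    by_cases hk : A k
    · have hkr : ¬ A k.rev := (key k).mp hk
      have e1 := rankA k hk
      have e2 := rankB k.rev hkr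
      rw [hrevcard k] at e2
      have hsplit := stmt4_split_aux A k hk
      apply Fin.ext
      rw [Fin.val_rev]
      omega
    · have hkr : A k.rev := (key' k).mp hk
      have e1 := rankB k hk
      have e2 := rankA k.rev hkr
      rw [hrevcard' k] at e2
      have hsplit : (Finset.univ.filter fun i => ¬ A i).card
          = (Finset.univ.filter fun j => ¬ A j ∧ j < k).card
            + ((Finset.univ.filter fun j => ¬ A j ∧ k < j).card + 1) :=
        stmt4_split_aux (fun i => ¬ A i) k hk
      apply Fin.ext
      rw [Fin.val_rev]
      omega
  · -- part 2
    have hnotA : ∀ i, ¬ A i ↔ ((τ i = i ∧ s i = -1) ∨ τ i < i) := by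
      intro i
      constructor
      · intro h
        by_cases hfix : τ i = i
        · rcases hsgn i hfix with h1 | h1
          · exact absurd (Or.inl ⟨hfix, h1⟩) h
          · exact Or.inl ⟨hfix, h1⟩
        · rcases lt_trichotomy i (τ i) with h' | h' | h'
          · exact absurd (Or.inr h') h
          · exact absurd h'.symm hfix
          · exact Or.inr h'
      · rintro h hA
        rcases h with ⟨hfix, h1⟩ | hlt
        · rcases hA with ⟨-, h2⟩ | h'
          · rw [h1] at h2; norm_num at h2
          · rw [hfix] at h'; exact lt_irrefl _ h'
        · rcases hA with ⟨hfix, -⟩ | h'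
          · rw [hfix] at hlt; exact lt_irrefl _ hlt
          · exact lt_asymm hlt h'
    have hTsplit : (Finset.univ.filter (fun i : Fin (2 * n) =>
          (i : ℕ) < n ∧ n ≤ (π i : ℕ)))
        = (Finset.univ.filter (fun i : Fin (2 * n) =>
            (i : ℕ) < n ∧ τ i = i ∧ s i = -1))
          ∪ (Finset.univ.filter (fun i : Fin (2 * n) =>
            (i : ℕ) < n ∧ τ i < i)) := by
      ext i
      simp only [Finset.mem_filter, Finset.mem_univ, true_and, Finset.mem_union]
      rw [← hmem' i, hnotA i]
      tauto
    have hdisj : Disjoint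
        (Finset.univ.filter (fun i : Fin (2 * n) =>
            (i : ℕ) < n ∧ τ i = i ∧ s i = -1))
        (Finset.univ.filter (fun i : Fin (2 * n) =>
            (i : ℕ) < n ∧ τ i < i)) := by
      rw [Finset.disjoint_filter]
      rintro x _ ⟨-, hfix, -⟩ ⟨-, h⟩
      rw [hfix] at h
      exact lt_irrefl _ h
    have hc2 : (Finset.univ.filter (fun i : Fin (2 * n) =>
          (i : ℕ) < n ∧ τ i < i)).card
        = (Finset.univ.filter (fun i : Fin (2 * n) =>
          i < τ i ∧ (τ i : ℕ) < n)).card := by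
      apply Finset.card_nbij' τ τ
      · intro a ha
        simp only [Finset.mem_coe, Finset.mem_filter, Finset.mem_univ, true_and] at ha ⊢
        refine ⟨?_, ?_⟩
        · rw [hinv a]; exact ha.2
        · rw [hinv a]; exact ha.1
      · intro a ha
        simp only [Finset.mem_coe, Finset.mem_filter, Finset.mem_univ, true_and] at ha ⊢
        refine ⟨ha.2, ?_⟩
        rw [hinv a]; exact ha.1
      · intro a _; exact hinv a
      · intro a _; exact hinv a
    rw [hTsplit, Finset.card_union_of_disjoint hdisj, hc2]
    exact hD₂
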